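/- As λ → +∞, 2π ∫₀^∞ r³ e^{−r²} (4 + r^{10} λ²)^{−1/2} dr = 2π · Γ(2/5) Γ(11/10) / (2^{1/5} √π) · λ^{−4/5} + O(λ^{−1}). -/

import Mathlib

open MeasureTheory

section Stmt13Aux
open Set Real


lemma pos_base (s : ℝ) : (0:ℝ) < 4 + s ^ 10 := by positivity

lemma cont_main : Continuous (fun s : ℝ => s ^ 3 * (4 + s ^ 10) ^ (-(1:ℝ)/2)) := by
  refine (continuous_pow 3).mul ?_
  exact (continuous_const.add (continuous_pow 10)).rpow_const
    (fun x => Or.inl (pos_base x).ne')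

lemma bound_tail {s : ℝ} (hs : 0 < s) :
    s ^ 3 * (4 + s ^ 10) ^ (-(1:ℝ)/2) ≤ s ^ (-(2:ℝ)) := by
  have h1 : (4 + s ^ 10) ^ (-(1:ℝ)/2) ≤ (s ^ 10 : ℝ) ^ (-(1:ℝ)/2) :=
    Real.rpow_le_rpow_of_nonpos (by positivity) (by linarith) (by norm_num)
  have h2 : (s ^ 10 : ℝ) ^ (-(1:ℝ)/2) = s ^ (-(5:ℝ)) := by
    rw [← Real.rpow_natCast s 10, ← Real.rpow_mul hs.le]
    norm_num
  have h3 : s ^ 3 * s ^ (-(5:ℝ)) = s ^ (-(2:ℝ)) := by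
    rw [← Real.rpow_natCast s 3, ← Real.rpow_add hs]
    norm_num
  calc s ^ 3 * (4 + s ^ 10) ^ (-(1:ℝ)/2) ≤ s ^ 3 * s ^ (-(5:ℝ)) := by
        rw [← h2]; exact mul_le_mul_of_nonneg_left h1 (by positivity)
    _ = s ^ (-(2:ℝ)) := h3

lemma bound_five {s : ℝ} (hs : 0 ≤ s) :
    s ^ 5 * (4 + s ^ 10) ^ (-(1:ℝ)/2) ≤ 1 := by
  have h1 : ((s:ℝ) ^ 10) ^ ((1:ℝ)/2) = s ^ 5 := by
    rw [← Real.rpow_natCast s 10, ← Real.rpow_mul hs]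
    rw [show ((10:ℕ):ℝ) * ((1:ℝ)/2) = ((5:ℕ):ℝ) by norm_num, Real.rpow_natCast]
  have h2 : s ^ 5 ≤ (4 + s ^ 10) ^ ((1:ℝ)/2) := by
    rw [← h1]
    exact Real.rpow_le_rpow (by positivity) (by linarith) (by norm_num)
  have h3 : (4 + s ^ 10) ^ (-(1:ℝ)/2) = ((4 + s ^ 10) ^ ((1:ℝ)/2))⁻¹ := by
    rw [← Real.rpow_neg (pos_base s).le]
    norm_num
  rw [h3, ← div_eq_mul_inv, div_le_one (Real.rpow_pos_of_pos (pos_base s) _)]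
  exact h2

lemma integrable_main : IntegrableOn (fun s : ℝ => s ^ 3 * (4 + s ^ 10) ^ (-(1:ℝ)/2))
    (Ioi (0:ℝ)) := by
  have hsplit : Ioi (0:ℝ) = Ioc 0 1 ∪ Ioi 1 := (Set.Ioc_union_Ioi_eq_Ioi zero_le_one).symm
  rw [hsplit, IntegrableOn, Measure.restrict_union (Set.Ioc_disjoint_Ioi le_rfl) measurableSet_Ioi,
    integrable_add_measure]
  constructor
  · exact (cont_main.integrableOn_Icc (a := 0) (b := 1)).mono_set Ioc_subset_Icc_self
  · apply Integrable.mono (integrableOn_Ioi_rpow_of_lt (by norm_num : (-2:ℝ) < -1) one_pos)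
      (cont_main.aestronglyMeasurable.restrict)
    filter_upwards [ae_restrict_mem measurableSet_Ioi] with s hs
    have hs1 : (0:ℝ) < s := lt_trans one_pos hs
    rw [Real.norm_eq_abs, Real.norm_eq_abs, abs_of_nonneg (by positivity),
      abs_of_nonneg (Real.rpow_nonneg hs1.le _)]
    exact bound_tail hs1

lemma beta_real : ∫ x in (0:ℝ)..1, x ^ ((1:ℝ)/10 - 1) * (1-x) ^ ((2:ℝ)/5 - 1)
    = Real.Gamma (1/10) * Real.Gamma (2/5) / Real.Gamma (1/2) := by
  have h := Complex.Gamma_mul_Gamma_eq_betaIntegral (s := 1/10) (t := 2/5)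
    (by norm_num) (by norm_num)
  have hb : Complex.betaIntegral (1/10) (2/5)
      = ((∫ x in (0:ℝ)..1, x ^ ((1:ℝ)/10 - 1) * (1-x) ^ ((2:ℝ)/5 - 1) : ℝ) : ℂ) := by
    rw [Complex.betaIntegral, ← intervalIntegral.integral_ofReal]
    apply intervalIntegral.integral_congr
    intro x hx
    rw [uIcc_of_le (by norm_num : (0:ℝ) ≤ 1)] at hx
    simp only []
    rw [Complex.ofReal_mul, Complex.ofReal_cpow hx.1, Complex.ofReal_cpow (by linarith [hx.2] : (0:ℝ) ≤ 1 - x)]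
    push_cast
    ring
  rw [hb] at h
  have h2 : ((1:ℂ)/10) + 2/5 = ((1/2 : ℝ) : ℂ) := by norm_num
  rw [h2] at h
  have h3 : ((Real.Gamma (1/10) * Real.Gamma (2/5) : ℝ) : ℂ)
      = ((Real.Gamma (1/2) * ∫ x in (0:ℝ)..1, x ^ ((1:ℝ)/10 - 1) * (1-x) ^ ((2:ℝ)/5 - 1) : ℝ) : ℂ) := by
    push_cast
    rw [← Complex.Gamma_ofReal, ← Complex.Gamma_ofReal, ← Complex.Gamma_ofReal] at *
    convert h using 2 <;> norm_num
  have h4 := Complex.ofReal_injective h3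
  have hpos : Real.Gamma (1/2) ≠ 0 := (Real.Gamma_pos_of_pos (by norm_num)).ne'
  field_simp at h4 ⊢
  linarith [h4]

lemma J_eq : ∫ u in Ioi (0:ℝ), u ^ (-(3:ℝ)/5) * (1+u) ^ (-(1:ℝ)/2)
    = Real.Gamma (1/10) * Real.Gamma (2/5) / Real.Gamma (1/2) := by
  have himg : (fun x : ℝ => x⁻¹ - 1) '' Ioo (0:ℝ) 1 = Ioi 0 := by
    ext y
    constructor
    · rintro ⟨x, ⟨hx0, hx1⟩, rfl⟩
      have : 1 < x⁻¹ := (one_lt_inv₀ hx0).mpr hx1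
      simpa using this
    · intro hy
      have hy' : 0 < y := mem_Ioi.mp hy
      refine ⟨(y+1)⁻¹, ⟨by positivity, ?_⟩, ?_⟩
      · rw [inv_lt_one_iff₀]; right; linarith
      · simp only []; rw [inv_inv]; ring
  have hderiv : ∀ x ∈ Ioo (0:ℝ) 1, HasDerivWithinAt (fun x : ℝ => x⁻¹ - 1)
      (-(x^2)⁻¹) (Ioo (0:ℝ) 1) x := fun x hx =>
    ((hasDerivAt_inv hx.1.ne').sub_const 1).hasDerivWithinAt
  have hinj : InjOn (fun x : ℝ => x⁻¹ - 1) (Ioo (0:ℝ) 1) := by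
    intro x hx y hy h
    simp only [sub_left_inj] at h
    exact inv_injective h
  have key := integral_image_eq_integral_abs_deriv_smul measurableSet_Ioo hderiv hinj
    (fun u => u ^ (-(3:ℝ)/5) * (1+u) ^ (-(1:ℝ)/2))
  rw [himg] at key
  rw [key, ← beta_real, intervalIntegral.integral_of_le (by norm_num : (0:ℝ) ≤ 1),
    integral_Ioc_eq_integral_Ioo]
  apply setIntegral_congr_fun measurableSet_Ioo
  intro x hx
  obtain ⟨hx0, hx1⟩ := hx
  have h1x : (0:ℝ) < 1 - x := by linarith
  have e1 : x⁻¹ - 1 = (1-x)/x := by field_simp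
  have e2 : 1 + (x⁻¹ - 1) = x⁻¹ := by ring
  have hx2 : |-(x^2)⁻¹| = x ^ (-(2:ℝ)) := by
    rw [abs_neg, abs_of_pos (by positivity), ← Real.rpow_natCast x 2,
      ← Real.rpow_neg hx0.le]
    norm_num
  have e3 : ((1-x)/x) ^ (-(3:ℝ)/5) = (1-x) ^ (-(3:ℝ)/5) * x ^ ((3:ℝ)/5) := by
    rw [Real.div_rpow h1x.le hx0.le, div_eq_mul_inv, ← Real.rpow_neg hx0.le]
    norm_num
  have e4 : (x⁻¹) ^ (-(1:ℝ)/2) = x ^ ((1:ℝ)/2) := by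
    rw [Real.inv_rpow hx0.le, ← Real.rpow_neg hx0.le]
    norm_num
  simp only []
  rw [smul_eq_mul, e2, e1, hx2, e3, e4]
  have : x ^ (-(2:ℝ)) * ((1-x) ^ (-(3:ℝ)/5) * x ^ ((3:ℝ)/5) * x ^ ((1:ℝ)/2))
      = (x ^ (-(2:ℝ)) * x ^ ((3:ℝ)/5) * x ^ ((1:ℝ)/2)) * (1-x) ^ (-(3:ℝ)/5) := by ring
  rw [this, ← Real.rpow_add hx0, ← Real.rpow_add hx0]
  norm_num

lemma K_eq : ∫ w in Ioi (0:ℝ), w ^ (-(3:ℝ)/5) * (4+w) ^ (-(1:ℝ)/2)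
    = (4:ℝ) ^ (-(11:ℝ)/10) * 4 * (Real.Gamma (1/10) * Real.Gamma (2/5) / Real.Gamma (1/2)) := by
  have key := integral_comp_mul_left_Ioi
    (fun u => u ^ (-(3:ℝ)/5) * (1+u) ^ (-(1:ℝ)/2)) 0 (by norm_num : (0:ℝ) < 1/4)
  rw [mul_zero, J_eq, smul_eq_mul] at key
  have congr1 : ∫ w in Ioi (0:ℝ), ((1/4:ℝ) * w) ^ (-(3:ℝ)/5) * (1+(1/4:ℝ)*w) ^ (-(1:ℝ)/2)
      = ∫ w in Ioi (0:ℝ), (4:ℝ) ^ ((11:ℝ)/10) * (w ^ (-(3:ℝ)/5) * (4+w) ^ (-(1:ℝ)/2)) := by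
    apply setIntegral_congr_fun measurableSet_Ioi
    intro w hw
    have hw0 : (0:ℝ) < w := hw
    simp only []
    have e1 : ((1/4:ℝ) * w) ^ (-(3:ℝ)/5) = (4:ℝ) ^ ((3:ℝ)/5) * w ^ (-(3:ℝ)/5) := by
      rw [Real.mul_rpow (by norm_num) hw0.le]
      congr 1
      rw [one_div, ← Real.rpow_neg_one (4:ℝ), ← Real.rpow_mul (by norm_num : (0:ℝ) ≤ 4)]
      norm_num
    have e2 : (1 + (1/4:ℝ)*w) = (4+w) / 4 := by ring
    have e3 : ((4+w)/4) ^ (-(1:ℝ)/2) = (4+w) ^ (-(1:ℝ)/2) * (4:ℝ) ^ ((1:ℝ)/2) := by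
      rw [Real.div_rpow (by linarith) (by norm_num : (0:ℝ) ≤ 4), div_eq_mul_inv,
        ← Real.rpow_neg (by norm_num : (0:ℝ) ≤ 4)]
      norm_num
    rw [e1, e2, e3]
    have e4 : (4:ℝ) ^ ((3:ℝ)/5) * (4:ℝ) ^ ((1:ℝ)/2) = (4:ℝ) ^ ((11:ℝ)/10) := by
      rw [← Real.rpow_add (by norm_num : (0:ℝ) < 4)]
      norm_num
    calc (4:ℝ) ^ ((3:ℝ)/5) * w ^ (-(3:ℝ)/5) * ((4+w) ^ (-(1:ℝ)/2) * (4:ℝ) ^ ((1:ℝ)/2))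
        = ((4:ℝ) ^ ((3:ℝ)/5) * (4:ℝ) ^ ((1:ℝ)/2)) * (w ^ (-(3:ℝ)/5) * (4+w) ^ (-(1:ℝ)/2)) := by
          ring
      _ = (4:ℝ) ^ ((11:ℝ)/10) * (w ^ (-(3:ℝ)/5) * (4+w) ^ (-(1:ℝ)/2)) := by rw [e4]
  rw [congr1, integral_const_mul] at key
  have h4 : ((4:ℝ) ^ ((11:ℝ)/10))⁻¹ = (4:ℝ) ^ (-(11:ℝ)/10) := by
    rw [← Real.rpow_neg (by norm_num : (0:ℝ) ≤ 4)]
    norm_num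
  have h4pos : (0:ℝ) < (4:ℝ) ^ ((11:ℝ)/10) := Real.rpow_pos_of_pos (by norm_num) _
  set E := Real.Gamma (1/10) * Real.Gamma (2/5) / Real.Gamma (1/2) with hE
  apply mul_left_cancel₀ h4pos.ne'
  rw [key]
  have : (4:ℝ)^((11:ℝ)/10) * ((4:ℝ)^(-(11:ℝ)/10) * 4 * E)
      = ((4:ℝ)^((11:ℝ)/10) * (4:ℝ)^(-(11:ℝ)/10)) * (4*E) := by ring
  rw [this, ← Real.rpow_add (by norm_num : (0:ℝ) < 4)]
  norm_num

lemma A_eq : ∫ s in Ioi (0:ℝ), s ^ 3 * (4 + s ^ 10) ^ (-(1:ℝ)/2)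
    = Real.Gamma (2/5) * Real.Gamma (11/10) / ((2:ℝ) ^ ((1:ℝ)/5) * Real.sqrt Real.pi) := by
  have key := integral_comp_rpow_Ioi_of_pos
    (g := fun w => w ^ (-(3:ℝ)/5) * (4+w) ^ (-(1:ℝ)/2)) (p := 10) (by norm_num)
  rw [K_eq] at key
  have congr1 : ∫ x in Ioi (0:ℝ), ((10:ℝ) * x ^ ((10:ℝ)-1)) •
        ((x ^ (10:ℝ)) ^ (-(3:ℝ)/5) * (4 + x ^ (10:ℝ)) ^ (-(1:ℝ)/2))
      = ∫ x in Ioi (0:ℝ), 10 * (x ^ 3 * (4 + x ^ 10) ^ (-(1:ℝ)/2)) := by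
    apply setIntegral_congr_fun measurableSet_Ioi
    intro x hx
    have hx0 : (0:ℝ) < x := hx
    simp only [smul_eq_mul]
    have e0 : x ^ (10:ℝ) = x ^ (10:ℕ) := by
      rw [← Real.rpow_natCast x 10]; norm_num
    have e1 : (x ^ (10:ℝ)) ^ (-(3:ℝ)/5) = x ^ (-(6:ℝ)) := by
      rw [← Real.rpow_mul hx0.le]; norm_num
    have e2 : x ^ ((10:ℝ)-1) = x ^ ((9:ℝ)) := by norm_num
    rw [e1, e2, ← e0]
    have e3 : x ^ ((9:ℝ)) * x ^ (-(6:ℝ)) = x ^ (3:ℕ) := by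
      rw [← Real.rpow_add hx0, ← Real.rpow_natCast x 3]; norm_num
    calc (10:ℝ) * x ^ ((9:ℝ)) * (x ^ (-(6:ℝ)) * (4 + x ^ (10:ℝ)) ^ (-(1:ℝ)/2))
        = 10 * ((x ^ ((9:ℝ)) * x ^ (-(6:ℝ))) * (4 + x ^ (10:ℝ)) ^ (-(1:ℝ)/2)) := by ring
      _ = _ := by rw [e3, e0]
  rw [congr1, integral_const_mul] at key
  -- key : 10 * ∫ = 4^(-11/10)*4*(Γ(1/10)Γ(2/5)/Γ(1/2))
  have h10 : Real.Gamma (11/10) = (1/10) * Real.Gamma (1/10) := by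
    have := Real.Gamma_add_one (s := 1/10) (by norm_num)
    rw [show (1:ℝ)/10 + 1 = 11/10 by norm_num] at this
    linarith
  have hG12 : Real.Gamma (1/2) = Real.sqrt Real.pi := Real.Gamma_one_half_eq
  have hsq : Real.sqrt Real.pi ≠ 0 := (Real.sqrt_pos.mpr Real.pi_pos).ne'
  have h2pos : (0:ℝ) < (2:ℝ) ^ ((1:ℝ)/5) := Real.rpow_pos_of_pos (by norm_num) _
  have h4 : (4:ℝ) ^ (-(11:ℝ)/10) * 4 = (2:ℝ) ^ (-(1:ℝ)/5) := by
    rw [show (4:ℝ) = (2:ℝ)^(2:ℕ) by norm_num, ← Real.rpow_natCast (2:ℝ) 2,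
      ← Real.rpow_mul (by norm_num : (0:ℝ) ≤ 2), ← Real.rpow_add (by norm_num : (0:ℝ) < 2)]
    norm_num
  rw [h4, hG12] at key
  rw [h10]
  have h5 : (2:ℝ) ^ (-(1:ℝ)/5) = ((2:ℝ) ^ ((1:ℝ)/5))⁻¹ := by
    rw [← Real.rpow_neg (by norm_num : (0:ℝ) ≤ 2)]
    norm_num
  rw [h5] at key
  field_simp at key ⊢
  linear_combination key

lemma cont_eps (eps : ℝ) :
    Continuous (fun s : ℝ => s ^ 3 * Real.exp (-(eps * s ^ 2)) * (4 + s ^ 10) ^ (-(1:ℝ)/2)) := by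
  refine (((continuous_pow 3).mul ?_).mul ?_)
  · exact (continuous_const.mul (continuous_pow 2)).neg.rexp
  · exact (continuous_const.add (continuous_pow 10)).rpow_const
      (fun x => Or.inl (pos_base x).ne')

lemma integrable_eps {eps : ℝ} (heps : 0 ≤ eps) :
    IntegrableOn (fun s : ℝ => s ^ 3 * Real.exp (-(eps * s ^ 2)) * (4 + s ^ 10) ^ (-(1:ℝ)/2))
    (Ioi (0:ℝ)) := by
  apply Integrable.mono integrable_main (cont_eps eps).aestronglyMeasurable.restrict
  filter_upwards [ae_restrict_mem measurableSet_Ioi] with s hs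
  have hs0 : (0:ℝ) < s := hs
  have hexp : Real.exp (-(eps * s ^ 2)) ≤ 1 :=
    Real.exp_le_one_iff.mpr (neg_nonpos.mpr (by positivity))
  rw [Real.norm_eq_abs, Real.norm_eq_abs, abs_of_nonneg (by positivity),
    abs_of_nonneg (by positivity)]
  have h1 : (0:ℝ) ≤ (4 + s ^ 10) ^ (-(1:ℝ)/2) := (Real.rpow_pos_of_pos (pos_base s) _).le
  have := mul_le_mul_of_nonneg_right
    (mul_le_mul_of_nonneg_left hexp (pow_pos hs0 3).le) h1
  simpa using this

lemma diff_bound {eps T : ℝ} (heps : 0 ≤ eps) (hT : 0 < T) :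
    0 ≤ (∫ s in Ioi (0:ℝ), s ^ 3 * (4 + s ^ 10) ^ (-(1:ℝ)/2))
        - (∫ s in Ioi (0:ℝ), s ^ 3 * Real.exp (-(eps * s ^ 2)) * (4 + s ^ 10) ^ (-(1:ℝ)/2)) ∧
    (∫ s in Ioi (0:ℝ), s ^ 3 * (4 + s ^ 10) ^ (-(1:ℝ)/2))
        - (∫ s in Ioi (0:ℝ), s ^ 3 * Real.exp (-(eps * s ^ 2)) * (4 + s ^ 10) ^ (-(1:ℝ)/2))
      ≤ eps * T + T⁻¹ := by
  set h : ℝ → ℝ := fun s =>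
    s ^ 3 * (1 - Real.exp (-(eps * s ^ 2))) * (4 + s ^ 10) ^ (-(1:ℝ)/2) with hh
  have hdiff : (∫ s in Ioi (0:ℝ), s ^ 3 * (4 + s ^ 10) ^ (-(1:ℝ)/2))
      - (∫ s in Ioi (0:ℝ), s ^ 3 * Real.exp (-(eps * s ^ 2)) * (4 + s ^ 10) ^ (-(1:ℝ)/2))
      = ∫ s in Ioi (0:ℝ), h s := by
    rw [← integral_sub integrable_main (integrable_eps heps)]
    congr 1
    ext s
    simp only [hh]
    ring
  -- nonnegativity of h on Ioi 0
  have hnonneg : ∀ s ∈ Ioi (0:ℝ), 0 ≤ h s := by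
    intro s hs
    have hs0 : (0:ℝ) < s := hs
    have hexp : Real.exp (-(eps * s ^ 2)) ≤ 1 :=
      Real.exp_le_one_iff.mpr (neg_nonpos.mpr (by positivity))
    have h1 : (0:ℝ) ≤ (4 + s ^ 10) ^ (-(1:ℝ)/2) := (Real.rpow_pos_of_pos (pos_base s) _).le
    simp only [hh]
    exact mul_nonneg (mul_nonneg (by positivity) (sub_nonneg.mpr hexp)) h1
  have cont_h : Continuous h := by
    refine ((continuous_pow 3).mul (continuous_const.sub ?_)).mul ?_
    · exact (continuous_const.mul (continuous_pow 2)).neg.rexp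
    · exact (continuous_const.add (continuous_pow 10)).rpow_const
        (fun x => Or.inl (pos_base x).ne')
  have hint_h : IntegrableOn h (Ioi (0:ℝ)) := by
    have he : h = fun s => (s ^ 3 * (4 + s ^ 10) ^ (-(1:ℝ)/2))
        - (s ^ 3 * Real.exp (-(eps * s ^ 2)) * (4 + s ^ 10) ^ (-(1:ℝ)/2)) := by
      ext s; simp only [hh]; ring
    rw [he]
    exact integrable_main.sub (integrable_eps heps)
  have hsplit : Ioi (0:ℝ) = Ioc 0 T ∪ Ioi T := (Set.Ioc_union_Ioi_eq_Ioi hT.le).symm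
  have hsub1 : Ioc (0:ℝ) T ⊆ Ioi 0 := Ioc_subset_Ioi_self
  have hsub2 : Ioi T ⊆ Ioi (0:ℝ) := Ioi_subset_Ioi hT.le
  have hint1 : IntegrableOn h (Ioc (0:ℝ) T) := hint_h.mono_set hsub1
  have hint2 : IntegrableOn h (Ioi T) := hint_h.mono_set hsub2
  have hIsplit : ∫ s in Ioi (0:ℝ), h s = (∫ s in Ioc (0:ℝ) T, h s) + ∫ s in Ioi T, h s := by
    rw [hsplit]
    exact setIntegral_union (Set.Ioc_disjoint_Ioi le_rfl) measurableSet_Ioi hint1 hint2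
  have part1 : ∫ s in Ioc (0:ℝ) T, h s ≤ eps * T := by
    have hb := norm_setIntegral_le_of_norm_le_const (μ := volume) (s := Ioc (0:ℝ) T)
      (f := h) (C := eps) (by rw [Real.volume_Ioc]; exact ENNReal.ofReal_lt_top) ?_
    · rw [Real.volume_real_Ioc, max_eq_left (by linarith)] at hb
      calc ∫ s in Ioc (0:ℝ) T, h s ≤ ‖∫ s in Ioc (0:ℝ) T, h s‖ := le_abs_self _
        _ ≤ eps * (T - 0) := hb
        _ = eps * T := by ring
    · intro s hs
      have hs0 : (0:ℝ) < s := hs.1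
      have hc : (0:ℝ) ≤ (4 + s ^ 10) ^ (-(1:ℝ)/2) := (Real.rpow_pos_of_pos (pos_base s) _).le
      have hsub : 1 - Real.exp (-(eps * s ^ 2)) ≤ eps * s ^ 2 := by
        linarith [Real.add_one_le_exp (-(eps * s ^ 2))]
      have h2 : h s ≤ s ^ 3 * (eps * s ^ 2) * ((4 + s ^ 10) ^ (-(1:ℝ)/2)) := by
        simp only [hh]
        exact mul_le_mul_of_nonneg_right
          (mul_le_mul_of_nonneg_left hsub (by positivity)) hc
      have h3 : s ^ 3 * (eps * s ^ 2) * ((4 + s ^ 10) ^ (-(1:ℝ)/2))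
          = eps * (s ^ 5 * (4 + s ^ 10) ^ (-(1:ℝ)/2)) := by ring
      have h4 : eps * (s ^ 5 * (4 + s ^ 10) ^ (-(1:ℝ)/2)) ≤ eps * 1 :=
        mul_le_mul_of_nonneg_left (bound_five hs0.le) heps
      rw [Real.norm_eq_abs, abs_of_nonneg (hnonneg s (hsub1 hs))]
      linarith
  have part2 : ∫ s in Ioi T, h s ≤ T⁻¹ := by
    have hmono : ∫ s in Ioi T, h s ≤ ∫ s in Ioi T, s ^ (-(2:ℝ)) := by
      apply setIntegral_mono_on hint2
        ((integrableOn_Ioi_rpow_of_lt (by norm_num : (-2:ℝ) < -1) hT).congr_fun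
          (fun x _ => by norm_num) measurableSet_Ioi) measurableSet_Ioi
      intro s hs
      have hs0 : (0:ℝ) < s := lt_trans hT hs
      have hc : (0:ℝ) ≤ (4 + s ^ 10) ^ (-(1:ℝ)/2) := (Real.rpow_pos_of_pos (pos_base s) _).le
      have hexp : (0:ℝ) < Real.exp (-(eps * s ^ 2)) := Real.exp_pos _
      have h2 : h s ≤ s ^ 3 * (4 + s ^ 10) ^ (-(1:ℝ)/2) := by
        simp only [hh]
        nlinarith [mul_nonneg (mul_nonneg (pow_pos hs0 3).le hexp.le) hc]
      exact le_trans h2 (bound_tail hs0)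
    have hval : ∫ s in Ioi T, s ^ (-(2:ℝ)) = T⁻¹ := by
      rw [integral_Ioi_rpow_of_lt (by norm_num : (-2:ℝ) < -1) hT]
      rw [show (-2:ℝ) + 1 = -1 by norm_num, Real.rpow_neg_one]
      field_simp
    linarith [hmono, hval.le, hval.ge]
  constructor
  · rw [hdiff]
    exact setIntegral_nonneg measurableSet_Ioi hnonneg
  · rw [hdiff, hIsplit]
    linarith

lemma scale_eq {lam : ℝ} (hlam : 0 < lam) :
    (∫ r in Ioi (0:ℝ), r ^ 3 * Real.exp (-r ^ 2) * (4 + r ^ 10 * lam ^ 2) ^ (-(1:ℝ)/2))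
    = lam ^ (-(4:ℝ)/5) * ∫ x in Ioi (0:ℝ),
        x ^ 3 * Real.exp (-(lam ^ (-(2:ℝ)/5) * x ^ 2)) * (4 + x ^ 10) ^ (-(1:ℝ)/2) := by
  set c : ℝ := lam ^ (-(1:ℝ)/5) with hc
  have hc0 : 0 < c := Real.rpow_pos_of_pos hlam _
  have key := integral_comp_mul_left_Ioi
    (fun r => r ^ 3 * Real.exp (-r ^ 2) * (4 + r ^ 10 * lam ^ 2) ^ (-(1:ℝ)/2)) 0 hc0
  rw [mul_zero, smul_eq_mul] at key
  have hpow : ∀ (a : ℕ), c ^ a = lam ^ (-(1:ℝ)/5 * (a:ℕ)) := by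
    intro a
    rw [hc, ← Real.rpow_natCast (lam ^ (-(1:ℝ)/5)) a, ← Real.rpow_mul hlam.le]
  have hc2 : c ^ 2 = lam ^ (-(2:ℝ)/5) := by rw [hpow 2]; norm_num
  have hc10lam : c ^ 10 * lam ^ 2 = 1 := by
    rw [hpow 10, ← Real.rpow_natCast lam 2, ← Real.rpow_add hlam]
    norm_num
  have congr1 : (∫ x in Ioi (0:ℝ),
        (c*x) ^ 3 * Real.exp (-(c*x) ^ 2) * (4 + (c*x) ^ 10 * lam ^ 2) ^ (-(1:ℝ)/2))
      = ∫ x in Ioi (0:ℝ), c ^ 3 *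
          (x ^ 3 * Real.exp (-(lam ^ (-(2:ℝ)/5) * x ^ 2)) * (4 + x ^ 10) ^ (-(1:ℝ)/2)) := by
    apply setIntegral_congr_fun measurableSet_Ioi
    intro x hx
    simp only []
    have e1 : (c*x) ^ 2 = lam ^ (-(2:ℝ)/5) * x ^ 2 := by rw [mul_pow, hc2]
    have e2 : (c*x) ^ 10 * lam ^ 2 = x ^ 10 := by
      rw [mul_pow]
      calc c ^ 10 * x ^ 10 * lam ^ 2 = x ^ 10 * (c ^ 10 * lam ^ 2) := by ring
        _ = x ^ 10 := by rw [hc10lam]; ring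
    rw [e1, e2, mul_pow]
    ring
  rw [congr1, integral_const_mul] at key
  -- key : c^3 * ∫ ... = c⁻¹ * ∫ F
  have hc4 : c * c ^ 3 = lam ^ (-(4:ℝ)/5) := by
    calc c * c ^ 3 = c ^ (4:ℕ) := by ring
      _ = lam ^ (-(4:ℝ)/5) := by rw [hpow 4]; norm_num
  calc (∫ r in Ioi (0:ℝ), r ^ 3 * Real.exp (-r ^ 2) * (4 + r ^ 10 * lam ^ 2) ^ (-(1:ℝ)/2))
      = c * (c⁻¹ * ∫ r in Ioi (0:ℝ),
          r ^ 3 * Real.exp (-r ^ 2) * (4 + r ^ 10 * lam ^ 2) ^ (-(1:ℝ)/2)) := by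
        rw [← mul_assoc, mul_inv_cancel₀ hc0.ne', one_mul]
    _ = c * (c ^ 3 * ∫ x in Ioi (0:ℝ),
          x ^ 3 * Real.exp (-(lam ^ (-(2:ℝ)/5) * x ^ 2)) * (4 + x ^ 10) ^ (-(1:ℝ)/2)) := by
        rw [key]
    _ = _ := by rw [← mul_assoc, hc4]

end Stmt13Aux

section
open Set Real

/-- as `λ → +∞`,
`2π ∫₀^∞ r³ e^{−r²} (4 + r^{10} λ²)^{−1/2} dr
  = 2π Γ(2/5) Γ(11/10) / (2^{1/5} √π) · λ^{−4/5} + O(λ^{−1})`. -/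
theorem stmt_13 :
    ∃ C Λ : ℝ, ∀ lam : ℝ, Λ ≤ lam →
      |2 * Real.pi * (∫ r in Set.Ioi (0:ℝ),
          r ^ 3 * Real.exp (-r ^ 2) * (4 + r ^ 10 * lam ^ 2) ^ (-(1 : ℝ) / 2))
        - 2 * Real.pi * (Real.Gamma (2 / 5) * Real.Gamma (11 / 10) /
            ((2 : ℝ) ^ ((1 : ℝ) / 5) * Real.sqrt Real.pi)) * lam ^ (-(4 : ℝ) / 5)|
      ≤ C * lam ^ (-(1 : ℝ)) := by
  refine ⟨4 * Real.pi, 1, fun lam hlam => ?_⟩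
  have hlam0 : (0:ℝ) < lam := lt_of_lt_of_le one_pos hlam
  set A : ℝ := Real.Gamma (2/5) * Real.Gamma (11/10) /
      ((2:ℝ) ^ ((1:ℝ)/5) * Real.sqrt Real.pi) with hA
  set eps : ℝ := lam ^ (-(2:ℝ)/5) with heps
  set T : ℝ := lam ^ ((1:ℝ)/5) with hT
  have heps0 : 0 < eps := Real.rpow_pos_of_pos hlam0 _
  have hT0 : 0 < T := Real.rpow_pos_of_pos hlam0 _
  set Ieps : ℝ := ∫ x in Ioi (0:ℝ),
      x ^ 3 * Real.exp (-(eps * x ^ 2)) * (4 + x ^ 10) ^ (-(1:ℝ)/2) with hIeps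
  have hd := diff_bound heps0.le hT0
  rw [A_eq] at hd
  have hbound : eps * T + T⁻¹ = 2 * lam ^ (-(1:ℝ)/5) := by
    rw [heps, hT, ← Real.rpow_add hlam0, ← Real.rpow_neg hlam0.le]
    norm_num
    ring
  have habs : |Ieps - A| ≤ 2 * lam ^ (-(1:ℝ)/5) := by
    rw [abs_sub_comm, abs_of_nonneg hd.1]
    linarith [hd.2]
  have hscale := scale_eq hlam0
  have hmain : 2 * Real.pi * (∫ r in Set.Ioi (0:ℝ),
        r ^ 3 * Real.exp (-r ^ 2) * (4 + r ^ 10 * lam ^ 2) ^ (-(1:ℝ)/2))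
      - 2 * Real.pi * A * lam ^ (-(4:ℝ)/5)
      = 2 * Real.pi * lam ^ (-(4:ℝ)/5) * (Ieps - A) := by
    rw [hscale]
    ring
  rw [hmain, abs_mul, abs_of_pos (by positivity : (0:ℝ) < 2 * Real.pi * lam ^ (-(4:ℝ)/5))]
  have hfin : 2 * Real.pi * lam ^ (-(4:ℝ)/5) * (2 * lam ^ (-(1:ℝ)/5))
      = 4 * Real.pi * lam ^ (-(1:ℝ)) := by
    rw [show 2 * Real.pi * lam ^ (-(4:ℝ)/5) * (2 * lam ^ (-(1:ℝ)/5))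
        = 4 * Real.pi * (lam ^ (-(4:ℝ)/5) * lam ^ (-(1:ℝ)/5)) by ring,
      ← Real.rpow_add hlam0]
    norm_num
  calc 2 * Real.pi * lam ^ (-(4:ℝ)/5) * |Ieps - A|
      ≤ 2 * Real.pi * lam ^ (-(4:ℝ)/5) * (2 * lam ^ (-(1:ℝ)/5)) :=
        mul_le_mul_of_nonneg_left habs (by positivity)
    _ = 4 * Real.pi * lam ^ (-(1:ℝ)) := hfin

end
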